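/- arXiv:2204.03808 — 4 statements merged into one kernel-verified Lean document; each statement's English description precedes it below -/
import Mathlib

section
/- Define Φ(y) = √((15 - 4y^2)/(1 + 4y^2)) and Ψ⁻(y) = 1/4 - (y/2)Φ(y) for 0 < y < √15/2. Then Ψ⁻ is strictly decreasing on (0, √3/2) and strictly increasing on (√3/2, √15/2). -/
private lemma gsq (y : ℝ) (h : 0 ≤ 15 - 4*y^2) :
    (y * Real.sqrt ((15 - 4*y^2) / (1 + 4*y^2)))^2 = y^2 * (15 - 4*y^2) / (1 + 4*y^2) := by
  rw [mul_pow, Real.sq_sqrt (div_nonneg h (by positivity)), mul_div_assoc]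

private lemma key {a b : ℝ} (ha : 0 ≤ a) (hab : a < b) (hb : b^2 ≤ 15/4)
    (hc : 4*(a^2+b^2) + 16*a^2*b^2 < 15) :
    a * Real.sqrt ((15 - 4*a^2) / (1 + 4*a^2)) < b * Real.sqrt ((15 - 4*b^2) / (1 + 4*b^2)) := by
  have ha2 : a^2 < b^2 := by nlinarith
  have h15a : 0 ≤ 15 - 4*a^2 := by nlinarith
  have h15b : 0 ≤ 15 - 4*b^2 := by nlinarith
  have hgb : 0 ≤ b * Real.sqrt ((15 - 4*b^2) / (1 + 4*b^2)) := mul_nonneg (by linarith) (Real.sqrt_nonneg _)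
  refine lt_of_pow_lt_pow_left₀ 2 hgb ?_
  rw [gsq a h15a, gsq b h15b, div_lt_div_iff₀ (by positivity) (by positivity)]
  nlinarith [mul_pos (sub_pos.mpr ha2) (by linarith : (0:ℝ) < 15 - 4*(a^2+b^2) - 16*a^2*b^2)]

private lemma key' {a b : ℝ} (ha : 0 ≤ a) (hab : a < b) (hb : b^2 ≤ 15/4)
    (hc : 15 < 4*(a^2+b^2) + 16*a^2*b^2) :
    b * Real.sqrt ((15 - 4*b^2) / (1 + 4*b^2)) < a * Real.sqrt ((15 - 4*a^2) / (1 + 4*a^2)) := by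
  have ha2 : a^2 < b^2 := by nlinarith
  have h15a : 0 ≤ 15 - 4*a^2 := by nlinarith
  have h15b : 0 ≤ 15 - 4*b^2 := by nlinarith
  have hga : 0 ≤ a * Real.sqrt ((15 - 4*a^2) / (1 + 4*a^2)) := mul_nonneg ha (Real.sqrt_nonneg _)
  refine lt_of_pow_lt_pow_left₀ 2 hga ?_
  rw [gsq a h15a, gsq b h15b, div_lt_div_iff₀ (by positivity) (by positivity)]
  nlinarith [mul_pos (sub_pos.mpr ha2) (by linarith : (0:ℝ) < 4*(a^2+b^2) + 16*a^2*b^2 - 15)]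

theorem stmt_9 :
    StrictAntiOn
        (fun y : ℝ => 1/4 - y/2 * Real.sqrt ((15 - 4*y^2) / (1 + 4*y^2)))
        (Set.Ioo 0 (Real.sqrt 3 / 2)) ∧
      StrictMonoOn
        (fun y : ℝ => 1/4 - y/2 * Real.sqrt ((15 - 4*y^2) / (1 + 4*y^2)))
        (Set.Ioo (Real.sqrt 3 / 2) (Real.sqrt 15 / 2)) := by
  have h3 : (Real.sqrt 3 / 2)^2 = 3/4 := by
    rw [div_pow, Real.sq_sqrt (by norm_num : (0:ℝ) ≤ 3)]; norm_num
  have h15 : (Real.sqrt 15 / 2)^2 = 15/4 := by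
    rw [div_pow, Real.sq_sqrt (by norm_num : (0:ℝ) ≤ 15)]; norm_num
  have h3nn : (0:ℝ) ≤ Real.sqrt 3 / 2 := by positivity
  constructor
  · intro a ha b hb hab
    obtain ⟨ha0, ha1⟩ := ha
    obtain ⟨hb0, hb1⟩ := hb
    have haa : a^2 < 3/4 := by
      calc a^2 < (Real.sqrt 3 / 2)^2 := by exact pow_lt_pow_left₀ ha1 ha0.le two_ne_zero
      _ = 3/4 := h3
    have hbb : b^2 < 3/4 := by
      calc b^2 < (Real.sqrt 3 / 2)^2 := by exact pow_lt_pow_left₀ hb1 hb0.le two_ne_zero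
      _ = 3/4 := h3
    have := key ha0.le hab (by nlinarith) (by nlinarith [sq_nonneg a, sq_nonneg b, mul_pos (mul_pos ha0 ha0) (mul_pos hb0 hb0)])
    simp only
    linarith
  · intro a ha b hb hab
    obtain ⟨ha0, ha1⟩ := ha
    obtain ⟨hb0, hb1⟩ := hb
    have ha0' : (0:ℝ) < a := lt_of_le_of_lt h3nn ha0
    have haa : 3/4 < a^2 := by
      calc (3:ℝ)/4 = (Real.sqrt 3 / 2)^2 := h3.symm
      _ < a^2 := pow_lt_pow_left₀ ha0 h3nn two_ne_zero
    have hbb : b^2 < 15/4 := by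
      calc b^2 < (Real.sqrt 15 / 2)^2 := pow_lt_pow_left₀ hb1 (h3nn.trans hb0.le) two_ne_zero
      _ = 15/4 := h15
    have hab2 : a^2 < b^2 := pow_lt_pow_left₀ hab ha0'.le two_ne_zero
    have := key' ha0'.le hab hbb.le (by nlinarith)
    simp only
    linarith
end

section
/- Let P1 = (1/2, 0), P2 = (-1/2, 0), P5 = (0, y) with 0 < y < √15/2, and set Φ(y) = √((15 - 4y^2)/(1 + 4y^2)), x = 1/4 + (y/2)Φ(y), h = y/2 + Φ(y)/4, P3 = (x, h), P4 = (-x, h). Then |P1 - P2| = |P1 - P3| = |P3 - P5| = |P4 - P5| = |P2 - P4| = 1. -/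
theorem stmt_11 (y : ℝ) (hy0 : 0 < y) (hy1 : y < Real.sqrt 15 / 2) :
    let Φ : ℝ := Real.sqrt ((15 - 4*y^2) / (1 + 4*y^2))
    let x : ℝ := 1/4 + y/2 * Φ
    let h : ℝ := y/2 + Φ/4
    let P1 : EuclideanSpace ℝ (Fin 2) := !₂[1/2, 0]
    let P2 : EuclideanSpace ℝ (Fin 2) := !₂[-(1/2), 0]
    let P3 : EuclideanSpace ℝ (Fin 2) := !₂[x, h]
    let P4 : EuclideanSpace ℝ (Fin 2) := !₂[-x, h]
    let P5 : EuclideanSpace ℝ (Fin 2) := !₂[0, y]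
    dist P1 P2 = 1 ∧ dist P1 P3 = 1 ∧ dist P3 P5 = 1 ∧ dist P4 P5 = 1 ∧
      dist P2 P4 = 1 := by
  intro Φ x h P1 P2 P3 P4 P5
  have hden : (0:ℝ) < 1 + 4*y^2 := by positivity
  have hy2 : y^2 < 15/4 := by
    have h15 : (0:ℝ) ≤ 15 := by norm_num
    have := Real.sq_sqrt h15
    nlinarith [Real.sqrt_nonneg 15, hy0]
  have hnum : (0:ℝ) ≤ (15 - 4*y^2) / (1 + 4*y^2) := by
    apply div_nonneg (by nlinarith) hden.le
  have hΦ2 : Φ^2 = (15 - 4*y^2) / (1 + 4*y^2) := Real.sq_sqrt hnum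
  have hΦ2' : Φ^2 * (1 + 4*y^2) = 15 - 4*y^2 := by
    rw [hΦ2]; field_simp
  have key : ∀ a b : ℝ, a^2 + b^2 = 1 → Real.sqrt (a^2 + b^2) = 1 := by
    intro a b hab; rw [hab, Real.sqrt_one]
  refine ⟨?_, ?_, ?_, ?_, ?_⟩ <;>
  · rw [EuclideanSpace.dist_eq]
    simp only [Fin.sum_univ_two, P1, P2, P3, P4, P5, Matrix.cons_val_zero,
      Matrix.cons_val_one, Matrix.head_cons, Real.dist_eq, sq_abs]
    rw [Real.sqrt_eq_one]
    try simp only [x, h]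
    nlinarith [hΦ2', sq_nonneg Φ]
end

section
/- For y in (0, √3/2), the point (x, h) with Φ(y) = √((15 - 4y^2)/(1 + 4y^2)), x = 1/4 + (y/2)Φ(y), h = y/2 + Φ(y)/4 satisfies h > y; i.e., the apex vertex (0, y) lies strictly below the height of the lateral vertices, so the pentagon is concave. -/
theorem stmt_15 (y : ℝ) (hy0 : 0 < y) (hy1 : y < Real.sqrt 3 / 2) :
    y < y/2 + Real.sqrt ((15 - 4*y^2) / (1 + 4*y^2)) / 4 := by
  have h3 : Real.sqrt 3 ^ 2 = 3 := Real.sq_sqrt (by norm_num)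
  have h2 : y ^ 2 < 3 / 4 := by nlinarith [Real.sqrt_nonneg 3]
  have hden : (0:ℝ) < 1 + 4 * y ^ 2 := by positivity
  have key : 2 * y < Real.sqrt ((15 - 4*y^2) / (1 + 4*y^2)) := by
    rw [show 2*y = Real.sqrt ((2*y)^2) from (Real.sqrt_sq (by positivity)).symm]
    apply Real.sqrt_lt_sqrt (by positivity)
    rw [lt_div_iff₀ hden]
    nlinarith
  linarith
end

section
/- For y in (√3/2, √15/2), with Φ(y) = √((15 - 4y^2)/(1 + 4y^2)) and h = y/2 + Φ(y)/4, one has y > h. -/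
theorem stmt_16 (y : ℝ) (hy0 : Real.sqrt 3 / 2 < y) (hy1 : y < Real.sqrt 15 / 2) :
    y/2 + Real.sqrt ((15 - 4*y^2) / (1 + 4*y^2)) / 4 < y := by
  have h3 : Real.sqrt 3 ^ 2 = 3 := Real.sq_sqrt (by norm_num)
  have hypos : 0 < y := lt_of_lt_of_le (by positivity) hy0.le
  have hy2 : 3 / 4 < y ^ 2 := by nlinarith [Real.sqrt_nonneg 3]
  have hden : (0:ℝ) < 1 + 4*y^2 := by positivity
  have key : Real.sqrt ((15 - 4*y^2) / (1 + 4*y^2)) < 2*y := by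
    rw [Real.sqrt_lt' (by linarith)]
    rw [div_lt_iff₀ hden]
    nlinarith
  linarith
end
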